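/- Let ψ : ℝ⁴ → ℂ⁴ and θ : ℝ⁴ → ℝ be differentiable and m ∈ ℝ, and suppose ψ satisfies the exotic Dirac equation i·γ^μ(∂_μψ + (∂_μθ)ψ) = m·ψ pointwise (sum over μ = 0,1,2,3). Then the current J^μ = ψ†γ⁰γ^μψ satisfies ∂_μJ^μ + 2(∂_μθ)J^μ = 0, i.e. ∂_0J⁰ + ∂_1J¹ + ∂_2J² + ∂_3J³ + 2(∂_0θ·J⁰ + ∂_1θ·J¹ + ∂_2θ·J² + ∂_3θ·J³) = 0. -/

import Mathlib

open Matrix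

/-- γ⁰ in the Weyl (chiral) representation. -/
def gamma0 : Matrix (Fin 4) (Fin 4) ℂ :=
  !![0, 0, 1, 0; 0, 0, 0, 1; 1, 0, 0, 0; 0, 1, 0, 0]

/-- γ¹ in the Weyl representation. -/
def gamma1 : Matrix (Fin 4) (Fin 4) ℂ :=
  !![0, 0, 0, 1; 0, 0, 1, 0; 0, -1, 0, 0; -1, 0, 0, 0]

/-- γ² in the Weyl representation. -/
def gamma2 : Matrix (Fin 4) (Fin 4) ℂ :=
  !![0, 0, 0, -Complex.I; 0, 0, Complex.I, 0; 0, Complex.I, 0, 0; -Complex.I, 0, 0, 0]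

/-- γ³ in the Weyl representation. -/
def gamma3 : Matrix (Fin 4) (Fin 4) ℂ :=
  !![0, 0, 1, 0; 0, 0, 0, -1; -1, 0, 0, 0; 0, 1, 0, 0]

/-- γ⁵ = diag(I₂, −I₂) in the Weyl representation. -/
def gamma5 : Matrix (Fin 4) (Fin 4) ℂ :=
  !![1, 0, 0, 0; 0, 1, 0, 0; 0, 0, -1, 0; 0, 0, 0, -1]

/-- The bilinear ψ† M ψ. -/
noncomputable def bil (M : Matrix (Fin 4) (Fin 4) ℂ) (ψ : Fin 4 → ℂ) : ℂ :=
  star ψ ⬝ᵥ M.mulVec ψ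

/-- Partial derivative of a function on ℝ⁴ along the μ-th coordinate direction. -/
noncomputable def pd {E : Type*} [NormedAddCommGroup E] [NormedSpace ℝ E]
    (f : (Fin 4 → ℝ) → E) (μ : Fin 4) (x : Fin 4 → ℝ) : E :=
  fderiv ℝ f x (Pi.single μ 1)

lemma pd_bil (M : Matrix (Fin 4) (Fin 4) ℂ) (ψ : (Fin 4 → ℝ) → Fin 4 → ℂ)
    (hψ : Differentiable ℝ ψ) (μ : Fin 4) (x : Fin 4 → ℝ) :
    pd (fun y => bil M (ψ y)) μ x
      = star (pd ψ μ x) ⬝ᵥ M.mulVec (ψ x) + star (ψ x) ⬝ᵥ M.mulVec (pd ψ μ x) := by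
  set D := fderiv ℝ ψ x with hDdef
  have hD : HasFDerivAt ψ D x := (hψ x).hasFDerivAt
  have hDi : ∀ i, HasFDerivAt (fun y => ψ y i)
      ((ContinuousLinearMap.proj i).comp D) x := by
    rw [← hasFDerivAt_pi']; exact hD
  set C : ℂ →L[ℝ] ℂ := Complex.conjCLE.toContinuousLinearMap with hC
  have hconj : ∀ i, HasFDerivAt (fun y => (starRingEnd ℂ) (ψ y i))
      (C.comp ((ContinuousLinearMap.proj i).comp D)) x := fun i =>
    (C.hasFDerivAt.comp x (hDi i))
  have hterm : ∀ i j, HasFDerivAt (fun y => (starRingEnd ℂ) (ψ y i) * (M i j * ψ y j))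
      ((starRingEnd ℂ) (ψ x i) • (M i j • ((ContinuousLinearMap.proj j).comp D))
        + (M i j * ψ x j) • (C.comp ((ContinuousLinearMap.proj i).comp D))) x := by
    intro i j
    exact (hconj i).mul ((hDi j).const_mul (M i j))
  have hsum : HasFDerivAt (fun y => ∑ i : Fin 4, ∑ j : Fin 4,
      (starRingEnd ℂ) (ψ y i) * (M i j * ψ y j))
      (∑ i : Fin 4, ∑ j : Fin 4,
        ((starRingEnd ℂ) (ψ x i) • (M i j • ((ContinuousLinearMap.proj j).comp D))
        + (M i j * ψ x j) • (C.comp ((ContinuousLinearMap.proj i).comp D)))) x := by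
    apply HasFDerivAt.fun_sum; intro i _
    apply HasFDerivAt.fun_sum; intro j _
    exact hterm i j
  have hfun : (fun y => bil M (ψ y)) = fun y => ∑ i : Fin 4, ∑ j : Fin 4,
      (starRingEnd ℂ) (ψ y i) * (M i j * ψ y j) := by
    funext y
    simp [bil, dotProduct, mulVec, Finset.mul_sum]
  rw [pd, hfun, hsum.fderiv]
  simp [dotProduct, mulVec, Finset.mul_sum, Finset.sum_add_distrib, hC, pd,
    Complex.conjCLE_apply, smul_eq_mul, mul_comm, mul_left_comm]
  simp only [← hDdef, Finset.sum_mul]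
  exact add_comm _ _

set_option maxHeartbeats 2000000 in
theorem exotic_current_conservation
    (ψ : (Fin 4 → ℝ) → (Fin 4 → ℂ)) (θ : (Fin 4 → ℝ) → ℝ) (m : ℝ)
    (hψ : Differentiable ℝ ψ) (hθ : Differentiable ℝ θ)
    (hdirac : ∀ x,
      Complex.I • (gamma0.mulVec (pd ψ 0 x + (pd θ 0 x : ℝ) • ψ x)
        + gamma1.mulVec (pd ψ 1 x + (pd θ 1 x : ℝ) • ψ x)
        + gamma2.mulVec (pd ψ 2 x + (pd θ 2 x : ℝ) • ψ x)
        + gamma3.mulVec (pd ψ 3 x + (pd θ 3 x : ℝ) • ψ x))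
      = (m : ℂ) • ψ x) :
    ∀ x,
      pd (fun y => bil (gamma0 * gamma0) (ψ y)) 0 x
        + pd (fun y => bil (gamma0 * gamma1) (ψ y)) 1 x
        + pd (fun y => bil (gamma0 * gamma2) (ψ y)) 2 x
        + pd (fun y => bil (gamma0 * gamma3) (ψ y)) 3 x
        + 2 * (((pd θ 0 x : ℝ) : ℂ) * bil (gamma0 * gamma0) (ψ x)
          + ((pd θ 1 x : ℝ) : ℂ) * bil (gamma0 * gamma1) (ψ x)
          + ((pd θ 2 x : ℝ) : ℂ) * bil (gamma0 * gamma2) (ψ x)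
          + ((pd θ 3 x : ℝ) : ℂ) * bil (gamma0 * gamma3) (ψ x)) = 0 := by
  intro x
  have h := hdirac x
  have h0 := congrFun h 0
  have h1 := congrFun h 1
  have h2 := congrFun h 2
  have h3 := congrFun h 3
  simp [Pi.smul_apply, Pi.add_apply, mulVec, dotProduct, Fin.sum_univ_four,
    gamma0, gamma1, gamma2, gamma3, smul_eq_mul, Complex.real_smul, mul_add]
    at h0 h1 h2 h3
  have hc0 := congrArg (starRingEnd ℂ) h0
  have hc1 := congrArg (starRingEnd ℂ) h1
  have hc2 := congrArg (starRingEnd ℂ) h2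
  have hc3 := congrArg (starRingEnd ℂ) h3
  simp only [map_add, _root_.map_mul, map_neg, Complex.conj_I, Complex.conj_ofReal]
    at hc0 hc1 hc2 hc3
  apply mul_left_cancel₀ Complex.I_ne_zero
  rw [mul_zero]
  rw [pd_bil _ _ hψ, pd_bil _ _ hψ, pd_bil _ _ hψ, pd_bil _ _ hψ]
  simp only [bil, ← Matrix.mulVec_mulVec]
  simp [mulVec, dotProduct, Fin.sum_univ_four, gamma0, gamma1, gamma2, gamma3,
    Matrix.vecHead, Matrix.vecTail, Pi.star_apply, Complex.star_def, mul_add, add_mul]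

  linear_combination (starRingEnd ℂ) (ψ x 2) * h0 + (starRingEnd ℂ) (ψ x 3) * h1
    + (starRingEnd ℂ) (ψ x 0) * h2 + (starRingEnd ℂ) (ψ x 1) * h3
    - ψ x 2 * hc0 - ψ x 3 * hc1 - ψ x 0 * hc2 - ψ x 1 * hc3
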